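/- Let π be a 231-avoiding permutation of [n] and λ_π the relabeling permutation defined by P(π) = λ_π ∘ π (i.e., λ_π(π(i)) = P(π)(i) for all i). If x < y are values such that no value larger than y occurs between x and y in π, then λ_π(x) < λ_π(y). -/

import Mathlib

/-- Stack sorting with fuel (fuel = length always suffices). -/
def stackSortAux : ℕ → List ℕ → List ℕ
  | 0, _ => []
  | _ + 1, [] => []
  | fuel + 1, x :: xs =>
    let l := x :: xs
    let m := l.foldr max 0
    stackSortAux fuel (l.takeWhile (· ≠ m)) ++
      stackSortAux fuel ((l.dropWhile (· ≠ m)).tail) ++ [m]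

/-- The stack sorting operator `S`: `S(ε) = ε` and `S(α n β) = S(α) S(β) n`
where `n` is the maximum element. -/
def stackSort (l : List ℕ) : List ℕ := stackSortAux l.length l

/-- `σ` avoids the pattern 231. -/
def Avoids231 (σ : List ℕ) : Prop :=
  ¬ ∃ i j k, i < j ∧ j < k ∧ k < σ.length ∧
      σ.getD k 0 < σ.getD i 0 ∧ σ.getD i 0 < σ.getD j 0

/-- `σ` avoids the pattern 132. -/
def Avoids132 (σ : List ℕ) : Prop :=
  ¬ ∃ i j k, i < j ∧ j < k ∧ k < σ.length ∧
      σ.getD i 0 < σ.getD k 0 ∧ σ.getD k 0 < σ.getD j 0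

/-- Binary trees with natural number labels. -/
inductive BTree where
  | leaf : BTree
  | node : BTree → ℕ → BTree → BTree

def BTree.inorder : BTree → List ℕ
  | .leaf => []
  | .node l n r => l.inorder ++ [n] ++ r.inorder

def BTree.postorder : BTree → List ℕ
  | .leaf => []
  | .node l n r => l.postorder ++ r.postorder ++ [n]

/-- A tree is decreasing when labels strictly decrease from root to leaves. -/
def BTree.Decreasing : BTree → Prop
  | .leaf => True
  | .node l n r =>
      l.Decreasing ∧ r.Decreasing ∧
      (∀ x ∈ l.inorder, x < n) ∧ (∀ x ∈ r.inorder, x < n)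

/-- The underlying unlabeled shape of a tree (labels replaced by `0`). -/
def BTree.shape : BTree → BTree
  | .leaf => .leaf
  | .node l _ r => .node l.shape 0 r.shape

def BTree.map (f : ℕ → ℕ) : BTree → BTree
  | .leaf => .leaf
  | .node l n r => .node (l.map f) (f n) (r.map f)

/-- Labels on the rightmost branch from the root. -/
def BTree.rightBranch : BTree → List ℕ
  | .leaf => []
  | .node _ n r => n :: r.rightBranch

/-- Labels on the leftmost branch from the root. -/
def BTree.leftBranch : BTree → List ℕ
  | .leaf => []
  | .node l n _ => n :: l.leftBranch

def TinAux : ℕ → List ℕ → BTree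
  | 0, _ => .leaf
  | _ + 1, [] => .leaf
  | fuel + 1, x :: xs =>
    let l := x :: xs
    let m := l.foldr max 0
    .node (TinAux fuel (l.takeWhile (· ≠ m))) m
          (TinAux fuel ((l.dropWhile (· ≠ m)).tail))

/-- The decreasing binary tree whose in-order reading is `l`. -/
def Tin (l : List ℕ) : BTree := TinAux l.length l

def PpermAux : ℕ → List ℕ → List ℕ
  | 0, _ => []
  | _ + 1, [] => []
  | fuel + 1, x :: xs =>
    let l := x :: xs
    let m := l.foldr max 0
    let α := l.takeWhile (· ≠ m)
    let β := (l.dropWhile (· ≠ m)).tail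
    (PpermAux fuel α).map (· + β.length) ++ [m] ++
      PpermAux fuel (β.map (· - α.length))

/-- The bijection `P` from 231-avoiding to 132-avoiding permutations,
`P(ε) = ε` and `P(α ⊕ (1 ⊖ β)) = (P(α) ⊕ 1) ⊖ P(β)`. -/
def Pperm (l : List ℕ) : List ℕ := PpermAux l.length l

/-- Direct sum of permutations: `α ⊕ β`. -/
def osum (α β : List ℕ) : List ℕ := α ++ β.map (· + α.length)

/-- Skew sum of permutations: `α ⊖ β`. -/
def ossum (α β : List ℕ) : List ℕ := α.map (· + β.length) ++ β

def lrP : ℕ → List ℕ × List ℕ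
  | 0 => ([], [])
  | m + 1 => (ossum [1] (lrP m).2, osum (lrP m).1 [1])

/-- `λ_n`: `λ_{m+1} = 1 ⊖ ρ_m`. -/
def lamP (n : ℕ) : List ℕ := (lrP n).1

/-- `ρ_n`: `ρ_{m+1} = λ_m ⊕ 1`. -/
def rhoP (n : ℕ) : List ℕ := (lrP n).2

/-- `s` and `p` are order isomorphic lists. -/
def OrderIsoList (s p : List ℕ) : Prop :=
  s.length = p.length ∧
  ∀ i j, i < s.length → j < s.length →
    (s.getD i 0 < s.getD j 0 ↔ p.getD i 0 < p.getD j 0)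

/-- `σ` contains the pattern `π`. -/
def Contains (σ π : List ℕ) : Prop :=
  ∃ s : List ℕ, s.Sublist σ ∧ OrderIsoList s π

/-- The up-down word of a permutation (`true` = ascent `u`, `false` = descent `d`). -/
def updown (l : List ℕ) : List Bool :=
  (l.zip l.tail).map (fun p => decide (p.1 < p.2))

/-- No value larger than `max x y` occurs (strictly) between `x` and `y` in `l`. -/
def NoLargerBetween (l : List ℕ) (x y : ℕ) : Prop :=
  ∀ i j k, i < j → j < k → k < l.length →
    ((l.getD i 0 = x ∧ l.getD k 0 = y) ∨ (l.getD i 0 = y ∧ l.getD k 0 = x)) →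
    l.getD j 0 ≤ max x y

/-- The basic operators: stack sorting `S` and reversal `R`. -/
inductive SOp where
  | s : SOp
  | r : SOp

def applyOp : SOp → List ℕ → List ℕ
  | .s => stackSort
  | .r => List.reverse

/-- A composition of operators from `{S, R}`. -/
def applyOps (ops : List SOp) : List ℕ → List ℕ :=
  ops.foldr (fun op f => applyOp op ∘ f) id

/-- `i` is the position of a left-to-right maximum of `l`. -/
def LRmaxPos (l : List ℕ) (i : ℕ) : Prop :=
  i < l.length ∧ ∀ j, j < i → l.getD j 0 < l.getD i 0

/-- `i` is the position of a right-to-left maximum of `l`. -/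
def RLmaxPos (l : List ℕ) (i : ℕ) : Prop :=
  i < l.length ∧ ∀ j, i < j → j < l.length → l.getD j 0 < l.getD i 0

/-- The reverse Zeilberger statistic: the largest `k` such that
`(n-k+1) … (n-1) n` is a subword of `l`, where `n = l.length`. -/
noncomputable def Rzeil (l : List ℕ) : ℕ :=
  sSup {k | (List.range' (l.length - k + 1) k).Sublist l}

private lemma foldr_max_mem : ∀ l : List ℕ, l ≠ [] → l.foldr max 0 ∈ l := by
  intro l
  induction l with
  | nil => simp
  | cons x xs ih =>
    intro _
    rcases eq_or_ne xs [] with rfl | hne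
    · simp
    · have h := ih hne
      simp only [List.foldr_cons]
      rcases le_total x (xs.foldr max 0) with h1 | h1
      · rw [max_eq_right h1]; exact List.mem_cons_of_mem _ h
      · rw [max_eq_left h1]; exact List.mem_cons_self

private lemma le_foldr_max : ∀ l : List ℕ, ∀ v ∈ l, v ≤ l.foldr max 0 := by
  intro l
  induction l with
  | nil => simp
  | cons x xs ih =>
    intro v hv
    simp only [List.foldr_cons]
    rcases List.mem_cons.1 hv with rfl | h
    · exact le_max_left _ _
    · exact le_trans (ih v h) (le_max_right _ _)

private lemma split_eq (l : List ℕ) (hl : l ≠ []) :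
    l = l.takeWhile (· ≠ l.foldr max 0) ++
        l.foldr max 0 :: (l.dropWhile (· ≠ l.foldr max 0)).tail := by
  set m := l.foldr max 0 with hm
  have hmem : m ∈ l := foldr_max_mem l hl
  have hd : l.dropWhile (· ≠ m) ≠ [] := by
    intro h
    have h2 : l.takeWhile (· ≠ m) = l := by
      conv_rhs => rw [← List.takeWhile_append_dropWhile (p := (· ≠ m)) (l := l)]
      rw [h, List.append_nil]
    have := List.takeWhile_eq_self_iff.1 h2 m hmem
    simp at this
  have hhead : (l.dropWhile (· ≠ m)).head hd = m := by
    have := List.head_dropWhile_not (· ≠ m) hd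
    simpa using this
  have hdw : l.dropWhile (· ≠ m) = m :: (l.dropWhile (· ≠ m)).tail := by
    conv_lhs => rw [← List.cons_head_tail hd]
    rw [hhead]
  conv_lhs => rw [← List.takeWhile_append_dropWhile (p := (· ≠ m)) (l := l), hdw]

private lemma takeWhile_length_lt (l : List ℕ) (hl : l ≠ []) :
    (l.takeWhile (· ≠ l.foldr max 0)).length < l.length := by
  have h := split_eq l hl
  conv_rhs => rw [h]
  simp only [List.length_append, List.length_cons]
  omega

private lemma getD_map (f : ℕ → ℕ) (L : List ℕ) {i : ℕ} (h : i < L.length) :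
    (L.map f).getD i 0 = f (L.getD i 0) := by
  rw [List.getD_eq_getElem _ _ (by simpa using h), List.getElem_map,
    List.getD_eq_getElem _ _ h]

private lemma mem_getD (L : List ℕ) {v : ℕ} (h : v ∈ L) :
    ∃ i, i < L.length ∧ L.getD i 0 = v := by
  obtain ⟨i, hi, he⟩ := List.mem_iff_getElem.1 h
  exact ⟨i, hi, by rw [List.getD_eq_getElem _ _ hi, he]⟩

private lemma getD_mem (L : List ℕ) {i : ℕ} (h : i < L.length) : L.getD i 0 ∈ L := by
  rw [List.getD_eq_getElem _ _ h]; exact List.getElem_mem h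

private lemma ppermAux_eq : ∀ f : ℕ, ∀ l : List ℕ, l.length ≤ f → PpermAux f l = Pperm l := by
  intro f
  induction f using Nat.strong_induction_on with
  | _ f ih =>
  intro l hlen
  obtain _ | f := f
  · have : l = [] := by
      cases l with
      | nil => rfl
      | cons a as => simp at hlen
    subst this; rfl
  obtain _ | ⟨x, xs⟩ := l
  · rfl
  · have hl : (x :: xs : List ℕ) ≠ [] := by simp
    have hsp := split_eq (x :: xs) hl
    have hlt := takeWhile_length_lt (x :: xs) hl
    have hlen2 := congrArg List.length hsp
    simp only [List.length_append, List.length_cons] at hlen2 hlt hlen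
    rw [show Pperm (x :: xs) = PpermAux (xs.length + 1) (x :: xs) from rfl]
    simp only [PpermAux]
    rw [ih f (by omega) _ (by omega),
        ih xs.length (by omega) ((x :: xs).takeWhile (· ≠ (x :: xs).foldr max 0)) (by omega),
        ih f (by omega) _ (by rw [List.length_map]; omega),
        ih xs.length (by omega)
          ((((x :: xs).dropWhile (· ≠ (x :: xs).foldr max 0)).tail).map
            (· - ((x :: xs).takeWhile (· ≠ (x :: xs).foldr max 0)).length))
          (by rw [List.length_map]; omega)]

private lemma pperm_eq (l : List ℕ) (hl : l ≠ []) :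
    Pperm l = (Pperm (l.takeWhile (· ≠ l.foldr max 0))).map
        (· + ((l.dropWhile (· ≠ l.foldr max 0)).tail).length) ++
      l.foldr max 0 ::
      Pperm ((((l.dropWhile (· ≠ l.foldr max 0)).tail)).map
        (· - (l.takeWhile (· ≠ l.foldr max 0)).length)) := by
  obtain _ | ⟨x, xs⟩ := l
  · simp at hl
  · have hl' : (x :: xs : List ℕ) ≠ [] := by simp
    have hlt := takeWhile_length_lt (x :: xs) hl'
    have hlen2 := congrArg List.length (split_eq (x :: xs) hl')
    simp only [List.length_append, List.length_cons] at hlen2 hlt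
    rw [show Pperm (x :: xs) = PpermAux (xs.length + 1) (x :: xs) from rfl]
    simp only [PpermAux]
    rw [ppermAux_eq xs.length _ (by omega),
        ppermAux_eq xs.length _ (by rw [List.length_map]; omega)]
    simp [List.append_assoc]

private lemma range_shuffle (a b : ℕ) :
    (List.range' (b + 1) a ++ (a + b + 1) :: List.range' 1 b).Perm
      (List.range' 1 (a + b + 1)) := by
  have h2 : List.range' (b + 1) a ++ [a + b + 1] = List.range' (b + 1) (a + 1) := by
    have h := List.range'_append (s := b + 1) (m := a) (n := 1) (step := 1)
    simp only [one_mul, List.range'_one] at h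
    rw [show b + 1 + a = a + b + 1 by omega] at h
    rw [h]
  have h1 : List.range' 1 b ++ List.range' (b + 1) (a + 1) = List.range' 1 (a + b + 1) := by
    have h := List.range'_append (s := 1) (m := b) (n := a + 1) (step := 1)
    simp only [one_mul] at h
    rw [show 1 + b = b + 1 by omega] at h
    rw [h, show b + (a + 1) = a + b + 1 by omega]
  rw [show List.range' (b + 1) a ++ (a + b + 1) :: List.range' 1 b
      = (List.range' (b + 1) a ++ [a + b + 1]) ++ List.range' 1 b by simp, h2, ← h1]
  exact List.perm_append_comm


private lemma master : ∀ n : ℕ, ∀ π : List ℕ, π.length = n →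
    π.Perm (List.range' 1 n) → Avoids231 π →
    (Pperm π).Perm (List.range' 1 n) ∧
    ∀ lam : ℕ → ℕ,
      (∀ i, i < π.length → lam (π.getD i 0) = (Pperm π).getD i 0) →
      ∀ x y : ℕ, x < y → x ∈ π → y ∈ π →
        NoLargerBetween π x y → lam x < lam y := by
  intro n
  induction n using Nat.strong_induction_on with
  | _ n ih =>
  intro π hlen hperm havoid
  rcases Nat.eq_zero_or_pos n with rfl | hn
  · have hnil : π = [] := List.eq_nil_of_length_eq_zero hlen
    subst hnil
    refine ⟨by simp [Pperm, PpermAux], ?_⟩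
    intro lam _ x y _ hx _ _
    simp at hx
  have hl : π ≠ [] := by
    intro h; rw [h] at hlen; simp at hlen; omega
  set m := π.foldr max 0 with hm
  set α := π.takeWhile (· ≠ m) with hα
  set β := (π.dropWhile (· ≠ m)).tail with hβ
  set a := α.length with ha
  set b := β.length with hb
  set β' := β.map (· - a) with hβ'
  have hsp : π = α ++ m :: β := split_eq π hl
  have hab : n = a + b + 1 := by
    have h := congrArg List.length hsp
    simp only [List.length_append, List.length_cons] at h
    omega
  -- m = n
  have hmle : m ≤ n := by
    have h := hperm.subset (foldr_max_mem π hl)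
    rw [List.mem_range'_1] at h
    omega
  have hnmem : n ∈ π := hperm.mem_iff.2 (by rw [List.mem_range'_1]; omega)
  have hmn : m = n := le_antisymm hmle (le_foldr_max π n hnmem)
  -- nodup and value bounds
  have hnd : π.Nodup := hperm.nodup_iff.2 (List.nodup_range' ..)
  have hmemval : ∀ v ∈ π, 1 ≤ v ∧ v ≤ n := by
    intro v hv
    have h := hperm.subset hv
    rw [List.mem_range'_1] at h
    omega
  have hndsp : (α ++ m :: β).Nodup := hsp ▸ hnd
  rw [List.nodup_append] at hndsp
  obtain ⟨hndα, hndmβ, hdisj⟩ := hndsp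
  have hndβ : β.Nodup := (List.nodup_cons.1 hndmβ).2
  have hmnotβ : m ∉ β := (List.nodup_cons.1 hndmβ).1
  have hαmemπ : ∀ u ∈ α, u ∈ π := by
    intro u hu; rw [hsp]; exact List.mem_append_left _ hu
  have hβmemπ : ∀ w ∈ β, w ∈ π := by
    intro w hw; rw [hsp]; exact List.mem_append_right _ (List.mem_cons_of_mem _ hw)
  have hαnem : ∀ u ∈ α, u ≠ m := by
    intro u hu
    have := List.mem_takeWhile_imp (hα ▸ hu)
    simpa using this
  have hβnem : ∀ w ∈ β, w ≠ m := by
    intro w hw h; exact hmnotβ (h ▸ hw)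
  -- getD facts for π
  have hgα : ∀ i, i < a → π.getD i 0 = α.getD i 0 := by
    intro i hi
    conv_lhs => rw [hsp]
    exact List.getD_append _ _ _ i hi
  have hgm : π.getD a 0 = m := by
    conv_lhs => rw [hsp]
    rw [List.getD_append_right _ _ _ _ (le_refl a)]
    simp [ha]
  have hgβ : ∀ j, j < b → π.getD (a + 1 + j) 0 = β.getD j 0 := by
    intro j hj
    conv_lhs => rw [hsp]
    rw [List.getD_append_right _ _ _ _ (by omega : α.length ≤ a + 1 + j),
      show a + 1 + j - α.length = j + 1 by omega]
    simp
  -- cross inequality from 231-avoidance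
  have hcross : ∀ u ∈ α, ∀ w ∈ β, u < w := by
    intro u hu w hw
    by_contra hc
    have huw : u ≠ w := by
      intro h
      exact hdisj u hu w (List.mem_cons_of_mem _ hw) h
    have hwu : w < u := by omega
    have hun : u < m := by
      have := (hmemval u (hαmemπ u hu)).2
      have := hαnem u hu
      omega
    obtain ⟨i, hi, hiu⟩ := mem_getD α hu
    obtain ⟨k, hk, hkw⟩ := mem_getD β hw
    exact havoid ⟨i, a, a + 1 + k, by omega, by omega, by omega,
      by rw [hgβ k hk, hgα i (by omega), hiu, hkw]; exact hwu,
      by rw [hgα i (by omega), hgm, hiu]; exact hun⟩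
  -- value ranges
  have hαval : ∀ u ∈ α, 1 ≤ u ∧ u ≤ a := by
    intro u hu
    refine ⟨(hmemval u (hαmemπ u hu)).1, ?_⟩
    have hsub : β ⊆ List.range' (u + 1) (n - 1 - u) := by
      intro w hw
      have h1 := hcross u hu w hw
      have h2 := (hmemval w (hβmemπ w hw)).2
      have h3 := hβnem w hw
      rw [List.mem_range'_1]
      omega
    have h := (List.subperm_of_subset hndβ hsub).length_le
    rw [List.length_range'] at h
    have h4 := (hmemval u (hαmemπ u hu)).2
    have h5 := hαnem u hu
    omega
  have hβval : ∀ w ∈ β, a + 1 ≤ w ∧ w ≤ a + b := by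
    intro w hw
    have hwn := hmemval w (hβmemπ w hw)
    have hsub : α ⊆ List.range' 1 (w - 1) := by
      intro u hu
      have h1 := hcross u hu w hw
      have h2 := (hmemval u (hαmemπ u hu)).1
      rw [List.mem_range'_1]
      omega
    have h := (List.subperm_of_subset hndα hsub).length_le
    rw [List.length_range'] at h
    have := hβnem w hw
    omega
  -- permutation facts
  have hαperm : α.Perm (List.range' 1 a) := by
    refine (List.subperm_of_subset hndα ?_).perm_of_length_le (by rw [List.length_range'])
    intro u hu
    have := hαval u hu
    rw [List.mem_range'_1]
    omega
  have hβperm : β.Perm (List.range' (a + 1) b) := by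
    refine (List.subperm_of_subset hndβ ?_).perm_of_length_le (by rw [List.length_range'])
    intro w hw
    have := hβval w hw
    rw [List.mem_range'_1]
    omega
  have hβ'perm : β'.Perm (List.range' 1 b) := by
    have h1 := hβperm.map (· - a)
    have h2 : (List.range' (a + 1) b).map (· - a) = List.range' 1 b := by
      have h3 := List.map_add_range' (a := a) 1 b 1
      rw [show a + 1 = a + 1 from rfl] at h3
      rw [← h3, List.map_map]
      have : ((· - a) ∘ (fun x => a + x)) = id := by
        funext x; simp [Function.comp]
      rw [this, List.map_id]
    rw [h2] at h1
    exact h1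
  -- avoidance inherited
  have hαav : Avoids231 α := by
    rintro ⟨i, j, k, hij, hjk, hk, h1, h2⟩
    exact havoid ⟨i, j, k, hij, hjk, by omega,
      by rw [hgα i (by omega), hgα k (by omega)]; exact h1,
      by rw [hgα i (by omega), hgα j (by omega)]; exact h2⟩
  have hβ'len : β'.length = b := by rw [hβ', List.length_map]
  have hβ'g : ∀ t, t < b → β'.getD t 0 = β.getD t 0 - a := by
    intro t ht
    rw [hβ']
    exact getD_map _ _ (by omega)
  have hβlow : ∀ t, t < b → a + 1 ≤ β.getD t 0 ∧ β.getD t 0 ≤ a + b := fun t ht =>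
    hβval _ (getD_mem β (by omega))
  have hβ'av : Avoids231 β' := by
    rintro ⟨i, j, k, hij, hjk, hk, h1, h2⟩
    rw [hβ'len] at hk
    rw [hβ'g i (by omega), hβ'g k (by omega)] at h1
    rw [hβ'g i (by omega), hβ'g j (by omega)] at h2
    have hbi := hβlow i (by omega)
    have hbj := hβlow j (by omega)
    have hbk := hβlow k (by omega)
    exact havoid ⟨a + 1 + i, a + 1 + j, a + 1 + k, by omega, by omega, by omega,
      by rw [hgβ i (by omega), hgβ k (by omega)]; omega,
      by rw [hgβ i (by omega), hgβ j (by omega)]; omega⟩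
  -- induction hypotheses
  obtain ⟨αPperm, αmain⟩ := ih a (by omega) α ha.symm hαperm hαav
  obtain ⟨βPperm, βmain⟩ := ih b (by omega) β' hβ'len hβ'perm hβ'av
  have hlPα : (Pperm α).length = a := by
    rw [αPperm.length_eq, List.length_range']
  have hlPβ : (Pperm β').length = b := by
    rw [βPperm.length_eq, List.length_range']
  -- Pperm unfolding
  have hPP : Pperm π = (Pperm α).map (· + b) ++ m :: Pperm β' := by
    have h := pperm_eq π hl
    rw [← hm, ← hα, ← hβ, ← ha, ← hb, ← hβ'] at h
    exact h
  -- the permutation part of the goal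
  have hmapreq : (List.range' 1 a).map (· + b) = List.range' (b + 1) a := by
    have h := List.map_add_range' (a := b) 1 a 1
    rw [← h]
    apply List.map_congr_left
    intro t _
    omega
  have permgoal : (Pperm π).Perm (List.range' 1 n) := by
    rw [hPP, hmn, hab]
    refine List.Perm.trans ?_ (range_shuffle a b)
    have p1 : ((Pperm α).map (· + b)).Perm (List.range' (b + 1) a) :=
      (αPperm.map (· + b)).trans (by rw [hmapreq])
    exact p1.append (βPperm.cons (a + b + 1))
  refine ⟨permgoal, ?_⟩
  -- the main part
  intro lam hlam x y hxy hxmem hymem hnlb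
  have hPg1 : ∀ i, i < a → (Pperm π).getD i 0 = (Pperm α).getD i 0 + b := by
    intro i hi
    rw [hPP, List.getD_append _ _ _ i (by rw [List.length_map, hlPα]; omega),
      getD_map _ _ (by omega)]
  have hPgm : (Pperm π).getD a 0 = m := by
    rw [hPP, List.getD_append_right _ _ _ _ (by rw [List.length_map, hlPα])]
    rw [List.length_map, hlPα]
    simp
  have hPg2 : ∀ j, j < b → (Pperm π).getD (a + 1 + j) 0 = (Pperm β').getD j 0 := by
    intro j hj
    rw [hPP, List.getD_append_right _ _ _ _ (by rw [List.length_map, hlPα]; omega)]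
    rw [List.length_map, hlPα, show a + 1 + j - a = j + 1 by omega]
    simp
  have hlamα : ∀ i, i < a → lam (α.getD i 0) = (Pperm α).getD i 0 + b := by
    intro i hi
    rw [← hgα i hi, hlam i (by omega), hPg1 i hi]
  have hlamm : lam m = m := by
    have h := hlam a (by omega)
    rw [hgm, hPgm] at h
    exact h
  have hlamβ : ∀ j, j < b → lam (β.getD j 0) = (Pperm β').getD j 0 := by
    intro j hj
    rw [← hgβ j hj, hlam (a + 1 + j) (by omega), hPg2 j hj]
  have hmemsplit : ∀ v ∈ π, v = m ∨ v ∈ α ∨ v ∈ β := by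
    intro v hv
    rw [hsp] at hv
    rcases List.mem_append.1 hv with h | h
    · exact Or.inr (Or.inl h)
    · rcases List.mem_cons.1 h with h | h
      · exact Or.inl h
      · exact Or.inr (Or.inr h)
  -- bounds for values of Pperm α / Pperm β'
  have hPαval : ∀ i, i < a → 1 ≤ (Pperm α).getD i 0 ∧ (Pperm α).getD i 0 ≤ a := by
    intro i hi
    have h := αPperm.subset (getD_mem (Pperm α) (show i < (Pperm α).length by omega))
    rw [List.mem_range'_1] at h
    omega
  have hPβval : ∀ j, j < b → 1 ≤ (Pperm β').getD j 0 ∧ (Pperm β').getD j 0 ≤ b := by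
    intro j hj
    have h := βPperm.subset (getD_mem (Pperm β') (show j < (Pperm β').length by omega))
    rw [List.mem_range'_1] at h
    omega
  rcases hmemsplit y hymem with hy | hy | hy
  · -- y = m : show lam x < m
    rcases hmemsplit x hxmem with hx | hx | hx
    · omega
    · obtain ⟨i, hi, hix⟩ := mem_getD α hx
      have h := hlamα i (by omega)
      rw [hix] at h
      have := hPαval i (by omega)
      rw [hy, hlamm, h, hmn]
      omega
    · obtain ⟨j, hj, hjx⟩ := mem_getD β hx
      have h := hlamβ j (by omega)
      rw [hjx] at h
      have := hPβval j (by omega)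
      rw [hy, hlamm, h, hmn]
      omega
  · -- y ∈ α
    rcases hmemsplit x hxmem with hx | hx | hx
    · -- x = m : impossible since y ≤ a < n = m = x
      have := hαval y hy
      omega
    · -- x, y ∈ α : use induction on α
      have hstep : ∀ i, i < α.length → (fun v => lam v - b) (α.getD i 0) = (Pperm α).getD i 0 := by
        intro i hi
        simp only
        rw [hlamα i (by omega)]
        omega
      have hnlbα : NoLargerBetween α x y := by
        intro i j k hij hjk hk hcond
        have h := hnlb i j k hij hjk (by omega)
          (by rw [hgα i (by omega), hgα k (by omega)]; exact hcond)
        rw [hgα j (by omega)] at h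
        exact h
      have hres := αmain (fun v => lam v - b) hstep x y hxy hx hy hnlbα
      obtain ⟨i, hi, hix⟩ := mem_getD α hx
      have h := hlamα i (by omega)
      rw [hix] at h
      omega
    · -- x ∈ β, y ∈ α : impossible
      have h1 := hβval x hx
      have h2 := hαval y hy
      omega
  · -- y ∈ β
    have hyv := hβval y hy
    rcases hmemsplit x hxmem with hx | hx | hx
    · -- x = m : impossible
      omega
    · -- x ∈ α, y ∈ β : contradicts NoLargerBetween (m sits between)
      exfalso
      obtain ⟨i, hi, hix⟩ := mem_getD α hx
      obtain ⟨k, hk, hky⟩ := mem_getD β hy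
      have h := hnlb i a (a + 1 + k) (by omega) (by omega) (by omega)
        (Or.inl ⟨by rw [hgα i (by omega), hix], by rw [hgβ k (by omega), hky]⟩)
      rw [hgm] at h
      have : max x y = y := Nat.max_eq_right (by omega)
      omega
    · -- x, y ∈ β : use induction on β'
      have hxv := hβval x hx
      have hstep : ∀ j, j < β'.length → (fun v => lam (v + a)) (β'.getD j 0) = (Pperm β').getD j 0 := by
        intro j hj
        rw [hβ'len] at hj
        simp only
        have hlo := hβlow j hj
        rw [show β'.getD j 0 + a = β.getD j 0 by rw [hβ'g j hj]; omega]
        exact hlamβ j hj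
      have hx' : x - a ∈ β' := List.mem_map.2 ⟨x, hx, rfl⟩
      have hy' : y - a ∈ β' := List.mem_map.2 ⟨y, hy, rfl⟩
      have hnlbβ : NoLargerBetween β' (x - a) (y - a) := by
        intro i j k hij hjk hk hcond
        rw [hβ'len] at hk
        have hbi := hβlow i (by omega)
        have hbj := hβlow j (by omega)
        have hbk := hβlow k (by omega)
        rw [hβ'g i (by omega), hβ'g k (by omega)] at hcond
        have hcond' : (β.getD i 0 = x ∧ β.getD k 0 = y) ∨ (β.getD i 0 = y ∧ β.getD k 0 = x) := by
          rcases hcond with ⟨h1, h2⟩ | ⟨h1, h2⟩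
          · exact Or.inl ⟨by omega, by omega⟩
          · exact Or.inr ⟨by omega, by omega⟩
        have h := hnlb (a + 1 + i) (a + 1 + j) (a + 1 + k) (by omega) (by omega) (by omega)
          (by rw [hgβ i (by omega), hgβ k (by omega)]
              rcases hcond' with ⟨h1, h2⟩ | ⟨h1, h2⟩
              · exact Or.inl ⟨h1, h2⟩
              · exact Or.inr ⟨h1, h2⟩)
        rw [hgβ j (by omega)] at h
        rw [hβ'g j (by omega)]
        have hmx : max x y = y := Nat.max_eq_right (by omega)
        have hmx' : max (x - a) (y - a) = y - a := Nat.max_eq_right (by omega)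
        omega
      have hres := βmain (fun v => lam (v + a)) hstep (x - a) (y - a) (by omega) hx' hy' hnlbβ
      rw [show x - a + a = x by omega, show y - a + a = y by omega] at hres
      exact hres

/-- the relabeling `λ_π` (with `P(π) = λ_π ∘ π`) preserves the
order of values `x < y` having no larger value between them in `π`. -/
theorem relabeling_preserves_order :
    ∀ π : List ℕ, π.Perm (List.range' 1 π.length) → Avoids231 π →
      ∀ lam : ℕ → ℕ,
        (∀ i, i < π.length → lam (π.getD i 0) = (Pperm π).getD i 0) →
        ∀ x y : ℕ, x < y → x ∈ π → y ∈ π →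
          NoLargerBetween π x y → lam x < lam y := by
  intro π hperm havoid lam hlam x y hxy hx hy hnlb
  exact (master π.length π rfl hperm havoid).2 lam hlam x y hxy hx hy hnlb
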